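/- For every real s ≥ 0, one has (4 − 8s)² + (24s² − 24s + 4)² ≥ 16/9. Equivalently, for every w₃ ∈ ℂ, the modulus of −8|w₃|² + 4 + i·(24|w₃|⁴ − 24|w₃|² + 4) is at least 4/3. -/

import Mathlib

open Complex

lemma key (s : ℝ) (hs : 0 ≤ s) :
    16 / 9 ≤ (4 - 8 * s) ^ 2 + (24 * s ^ 2 - 24 * s + 4) ^ 2 := by
  nlinarith [sq_nonneg (s - 1/2), sq_nonneg (s*(s-1)), sq_nonneg (24*s^2 - 24*s + 4),
    sq_nonneg (6*s^2 - 6*s + 1), sq_nonneg s, sq_nonneg (s-1), mul_nonneg hs hs,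
    sq_nonneg (s^2 - s)]

/-- For every real `s ≥ 0`, `(4 − 8s)² + (24s² − 24s + 4)² ≥ 16/9`;
equivalently, for every `w₃ ∈ ℂ` the modulus of
`−8|w₃|² + 4 + i(24|w₃|⁴ − 24|w₃|² + 4)` is at least `4/3`. -/
theorem stmt_15 :
    (∀ s : ℝ, 0 ≤ s → 16 / 9 ≤ (4 - 8 * s) ^ 2 + (24 * s ^ 2 - 24 * s + 4) ^ 2) ∧
    (∀ w₃ : ℂ, 4 / 3 ≤
      ‖((-8 * ‖w₃‖ ^ 2 + 4 : ℝ) : ℂ) +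
        Complex.I * ((24 * ‖w₃‖ ^ 4 - 24 * ‖w₃‖ ^ 2 + 4 : ℝ) : ℂ)‖) := by
  refine ⟨key, fun w₃ => ?_⟩
  set s : ℝ := ‖w₃‖ ^ 2 with hs
  have hs0 : 0 ≤ s := by positivity
  have h4 : (‖w₃‖ : ℝ) ^ 4 = s ^ 2 := by rw [hs]; ring
  rw [mul_comm Complex.I, Complex.norm_add_mul_I, h4]
  rw [show ((4:ℝ)/3) = Real.sqrt (16/9) by
    rw [show (16:ℝ)/9 = (4/3)^2 by norm_num, Real.sqrt_sq (by norm_num)]]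
  apply Real.sqrt_le_sqrt
  have := key s hs0
  nlinarith [this]
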